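/- The identity (μ;q)_a/(q;q)_a = Σ_{i+j=a} ν^j (λ;q)_j (ν;q)_i / ((q;q)_j (q;q)_i) holds for all a ≥ 0, where ν = μ/λ. -/

import Mathlib

open scoped BigOperators

noncomputable section

/-- The q-Pochhammer symbol `(z;q)_m = ∏_{j=0}^{m-1} (1 - z q^j)`. -/
def qP (q z : ℝ) (m : ℕ) : ℝ := ∏ j ∈ Finset.range m, (1 - z * q ^ j)

/-- The q-binomial coefficient, zero outside `0 ≤ k ≤ m`. -/
def qBinom (q : ℝ) (m k : ℕ) : ℝ :=
  if k ≤ m then qP q q m / (qP q q k * qP q q (m - k)) else 0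

lemma one_sub_qpow_ne (q : ℝ) (hq0 : 0 < q) (hq1 : q < 1) (m : ℕ) :
    1 - q ^ (m + 1) ≠ 0 := by
  have : q ^ (m + 1) < 1 := pow_lt_one₀ hq0.le hq1 (Nat.succ_ne_zero m)
  linarith

lemma qP_q_ne (q : ℝ) (hq0 : 0 < q) (hq1 : q < 1) (m : ℕ) :
    qP q q m ≠ 0 := by
  unfold qP
  rw [Finset.prod_ne_zero_iff]
  intro j _
  have h : q * q ^ j < 1 := by
    have := pow_lt_one₀ hq0.le hq1 (Nat.succ_ne_zero j)
    calc q * q ^ j = q ^ (j + 1) := by ring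
      _ < 1 := this
  linarith

lemma qP_succ (q z : ℝ) (m : ℕ) : qP q z (m + 1) = qP q z m * (1 - z * q ^ m) :=
  Finset.prod_range_succ _ _

lemma one_sub_q_mul_ne (q : ℝ) (hq0 : 0 < q) (hq1 : q < 1) (m : ℕ) :
    1 - q * q ^ m ≠ 0 := by
  have := one_sub_qpow_ne q hq0 hq1 m
  rwa [pow_succ, mul_comm (q ^ m) q] at this

lemma key (q lam nu : ℝ) (hq0 : 0 < q) (hq1 : q < 1) (a : ℕ) :
    qP q (lam * nu) a / qP q q a
      = ∑ j ∈ Finset.range (a + 1),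
          nu ^ j * qP q lam j * qP q nu (a - j) /
            (qP q q j * qP q q (a - j)) := by
  induction a with
  | zero => simp [qP]
  | succ a ih =>
    set T : ℕ → ℕ → ℝ := fun n j =>
      nu ^ j * qP q lam j * qP q nu (n - j) / (qP q q j * qP q q (n - j)) with hT
    have hrec : (1 - q ^ (a + 1)) * ∑ j ∈ Finset.range (a + 2), T (a + 1) j
        = (1 - lam * nu * q ^ a) * ∑ j ∈ Finset.range (a + 1), T a j := by
      calc (1 - q ^ (a + 1)) * ∑ j ∈ Finset.range (a + 2), T (a + 1) j
          = ∑ j ∈ Finset.range (a + 2), (1 - q ^ (a + 1)) * T (a + 1) j :=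
            Finset.mul_sum _ _ _
        _ = ∑ j ∈ Finset.range (a + 2),
              ((1 - q ^ (a + 1 - j)) * T (a + 1) j
                + q ^ (a + 1 - j) * (1 - q ^ j) * T (a + 1) j) := by
            apply Finset.sum_congr rfl
            intro j hj
            have hj' : j ≤ a + 1 := by
              simpa [Nat.lt_succ_iff] using hj
            have hpow : q ^ (a + 1 - j) * q ^ j = q ^ (a + 1) := by
              rw [← pow_add]; congr 1; omega
            linear_combination (T (a + 1) j) * hpow
        _ = (∑ j ∈ Finset.range (a + 2), (1 - q ^ (a + 1 - j)) * T (a + 1) j)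
            + ∑ j ∈ Finset.range (a + 2), q ^ (a + 1 - j) * (1 - q ^ j) * T (a + 1) j :=
            Finset.sum_add_distrib
        _ = (∑ j ∈ Finset.range (a + 1), (1 - q ^ (a + 1 - j)) * T (a + 1) j)
            + ∑ j ∈ Finset.range (a + 1),
                q ^ (a - j) * (1 - q ^ (j + 1)) * T (a + 1) (j + 1) := by
            congr 1
            · rw [Finset.sum_range_succ]
              simp
            · rw [Finset.sum_range_succ']
              simp [Nat.succ_sub_succ]
        _ = ∑ j ∈ Finset.range (a + 1), (1 - lam * nu * q ^ a) * T a j := by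
            rw [← Finset.sum_add_distrib]
            apply Finset.sum_congr rfl
            intro j hj
            have hj' : j ≤ a := by simpa [Nat.lt_succ_iff] using hj
            have e1 : a + 1 - j = (a - j) + 1 := by omega
            have e2 : a + 1 - (j + 1) = a - j := by omega
            have hQj := qP_q_ne q hq0 hq1 j
            have hQi := qP_q_ne q hq0 hq1 (a - j)
            have h1 := one_sub_q_mul_ne q hq0 hq1 (a - j)
            have h2 := one_sub_q_mul_ne q hq0 hq1 j
            have hpow : q ^ a = q ^ (a - j) * q ^ j := by
              rw [← pow_add]; congr 1; omega
            simp only [hT]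
            rw [e1, e2, qP_succ q nu (a - j), qP_succ q q (a - j),
              qP_succ q lam j, qP_succ q q j, hpow]
            simp only [pow_succ']
            field_simp [hQj, hQi, h1, h2]
            ring
        _ = (1 - lam * nu * q ^ a) * ∑ j ∈ Finset.range (a + 1), T a j :=
            (Finset.mul_sum _ _ _).symm
    have h1 := one_sub_qpow_ne q hq0 hq1 a
    have h2 := qP_q_ne q hq0 hq1 a
    have hS : ∑ j ∈ Finset.range (a + 2), T (a + 1) j
        = (1 - lam * nu * q ^ a) * (qP q (lam * nu) a / qP q q a) / (1 - q ^ (a + 1)) := by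
      rw [ih, eq_div_iff h1]
      linear_combination hrec
    have h3 := one_sub_q_mul_ne q hq0 hq1 a
    rw [qP_succ q (lam * nu) a, qP_succ q q a, hS]
    have h1' : 1 - q ^ (a + 1) = 1 - q * q ^ a := by rw [pow_succ]; ring
    rw [h1'] at hS ⊢
    field_simp [h2, h3]

/-- With `ν = μ/λ`:
`(μ;q)_a/(q;q)_a = ∑_{i+j=a} ν^j (λ;q)_j (ν;q)_i / ((q;q)_j (q;q)_i)`. -/
theorem coefficient_identity (q lam mu : ℝ) (hq0 : 0 < q) (hq1 : q < 1)
    (hlam : lam ≠ 0) (a : ℕ) :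
    qP q mu a / qP q q a
      = ∑ j ∈ Finset.range (a + 1),
          (mu / lam) ^ j * qP q lam j * qP q (mu / lam) (a - j) /
            (qP q q j * qP q q (a - j)) := by
  obtain ⟨nu, rfl⟩ : ∃ ν, mu = lam * ν := ⟨mu / lam, by field_simp⟩
  have h : lam * nu / lam = nu := by field_simp
  simp only [h]
  exact key q lam nu hq0 hq1 a
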